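/- Let Π be a 2-dimensional real vector space and ζ, η ∈ Π* linearly independent. The map x ↦ d(η/ζ)(x) = ζ(x)^{-2}·(ζ(x)·η − η(x)·ζ) is a bijection (indeed a diffeomorphism) from {x ∈ Π : ζ(x) ≠ 0} onto {ξ ∈ Π* : ξ(w) ≠ 0}, where (v,w) is the basis of Π dual to (ζ,η); its inverse is ξ ↦ ξ(w)^{-2}·(ξ(w)·v − ξ(v)·w). -/

import Mathlib

theorem stmt_14 (P : Type*) [AddCommGroup P] [Module ℝ P]
    (hdim : Module.finrank ℝ P = 2)
    (ζ η : P →ₗ[ℝ] ℝ) (hind : LinearIndependent ℝ ![ζ, η])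
    (v w : P) (hζv : ζ v = 1) (hζw : ζ w = 0) (hηv : η v = 0) (hηw : η w = 1)
    (F : P → (P →ₗ[ℝ] ℝ)) (hF : ∀ x : P, F x = (ζ x)⁻¹ ^ 2 • (ζ x • η - η x • ζ))
    (G : (P →ₗ[ℝ] ℝ) → P) (hG : ∀ ξ : P →ₗ[ℝ] ℝ, G ξ = (ξ w)⁻¹ ^ 2 • (ξ w • v - ξ v • w)) :
    (∀ x : P, ζ x ≠ 0 → (F x) w ≠ 0 ∧ G (F x) = x) ∧
    (∀ ξ : P →ₗ[ℝ] ℝ, ξ w ≠ 0 → ζ (G ξ) ≠ 0 ∧ F (G ξ) = ξ) := by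
  -- v, w are linearly independent
  have hli : LinearIndependent ℝ ![v, w] := by
    rw [LinearIndependent.pair_iff]
    intro a b hab
    have h1 := congrArg ζ hab
    have h2 := congrArg η hab
    simp [hζv, hζw, hηv, hηw] at h1 h2
    exact ⟨h1, h2⟩
  have hcard : Fintype.card (Fin 2) = Module.finrank ℝ P := by simp [hdim]
  let B := basisOfLinearIndependentOfCardEqFinrank hli hcard
  have hB : ∀ i, B i = ![v, w] i := fun i => by
    simp [B, basisOfLinearIndependentOfCardEqFinrank]
  -- decomposition of any x
  have hdec : ∀ x : P, x = ζ x • v + η x • w := by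
    intro x
    have hx : x = B.repr x 0 • v + B.repr x 1 • w := by
      conv_lhs => rw [← B.sum_repr x]
      rw [Fin.sum_univ_two, hB 0, hB 1]
      simp
    have hz : ζ x = B.repr x 0 := by
      conv_lhs => rw [hx]
      simp [hζv, hζw]
    have hh : η x = B.repr x 1 := by
      conv_lhs => rw [hx]
      simp [hηv, hηw]
    rw [hz, hh]; exact hx
  constructor
  · intro x hx
    have hFw : (F x) w = (ζ x)⁻¹ := by
      rw [hF]; simp [hζw, hηw]
      field_simp
    have hFv : (F x) v = -((ζ x)⁻¹ ^ 2 * η x) := by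
      rw [hF]; simp [hζv, hηv]
    refine ⟨by rw [hFw]; exact inv_ne_zero hx, ?_⟩
    rw [hG, hFw, hFv]
    rw [inv_inv]
    have : ζ x ^ 2 • ((ζ x)⁻¹ • v - -((ζ x)⁻¹ ^ 2 * η x) • w) = ζ x • v + η x • w := by
      rw [smul_sub, smul_smul, smul_smul]
      have h1 : ζ x ^ 2 * (ζ x)⁻¹ = ζ x := by field_simp
      have h2 : ζ x ^ 2 * -((ζ x)⁻¹ ^ 2 * η x) = -η x := by field_simp
      rw [h1, h2, neg_smul, sub_neg_eq_add]
    rw [this, ← hdec]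
  · intro ξ hξ
    have hζG : ζ (G ξ) = (ξ w)⁻¹ := by
      rw [hG]; simp [hζv, hζw]
      field_simp
    have hηG : η (G ξ) = -((ξ w)⁻¹ ^ 2 * ξ v) := by
      rw [hG]; simp [hηv, hηw]
    refine ⟨by rw [hζG]; exact inv_ne_zero hξ, ?_⟩
    rw [hF, hζG, hηG, inv_inv]
    ext x
    simp only [LinearMap.smul_apply, LinearMap.sub_apply, smul_eq_mul]
    have hxd := hdec x
    have hξx : ξ x = ζ x * ξ v + η x * ξ w := by
      conv_lhs => rw [hxd]
      simp [mul_comm]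
    rw [hξx]
    field_simp
    ring
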